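/- Let L ≥ 2 be an integer, A ∈ ℝ^{M×N}, y ∈ ℝ^M, and let x : [0,∞) → ℝ^N be differentiable, satisfy the reduced gradient flow x'(t) = −[Aᵀ(A x(t)^{⊙L} − y)] ⊙ x(t)^{⊙(L−1)} for all t ≥ 0, and have x(t) entrywise strictly positive. Write x̃(t) := x(t)^{⊙L}. Then for every z₊ ∈ S₊ and every t ≥ 0, d/dt D_F(z₊, x̃(t)) ≤ −(1/2)‖A x̃(t) − y₊‖₂², where y₊ := A z₊ is the Euclidean projection of y onto C₊ := {Az : z ≥ 0}, and F, D_F are as defined below. In particular, t ↦ D_F(z₊, x̃(t)) is nonincreasing. -/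

import Mathlib

open Filter Topology Matrix

noncomputable section

/-- The NNLS solution set `S₊ = argmin_{z ≥ 0} ‖Az − y‖₂²`. -/
def nnlsSet {M N : ℕ} (A : Matrix (Fin M) (Fin N) ℝ) (y : Fin M → ℝ) :
    Set (Fin N → ℝ) :=
  {z | (∀ i, 0 ≤ z i) ∧ ∀ w : Fin N → ℝ, (∀ i, 0 ≤ w i) →
    ∑ j, (A.mulVec z j - y j) ^ 2 ≤ ∑ j, (A.mulVec w j - y j) ^ 2}

/-- The reduced gradient flow `x'(t) = −[Aᵀ(A x(t)^{⊙L} − y)] ⊙ x(t)^{⊙(L−1)}` for `t ≥ 0`. -/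
def GradFlow {M N : ℕ} (A : Matrix (Fin M) (Fin N) ℝ) (y : Fin M → ℝ) (L : ℕ)
    (x : ℝ → Fin N → ℝ) : Prop :=
  ∀ t : ℝ, 0 ≤ t → ∀ i : Fin N,
    HasDerivAt (fun s => x s i)
      (-(Matrix.mulVec Aᵀ (A.mulVec (fun j => x t j ^ L) - y) i * x t i ^ (L - 1))) t

/-- The Bregman potential `F`: for `L = 2`, `F(x) = ½ Σₙ (xₙ log xₙ − xₙ)` (with `0·log 0 = 0`,
which holds automatically since `Real.log 0 = 0`); for `L > 2`,
`F(x) = (L/(2(2−L))) Σₙ xₙ^{2/L}`. -/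
def bregF {N : ℕ} (L : ℕ) (x : Fin N → ℝ) : ℝ :=
  if L = 2 then (1 / 2) * ∑ n, (x n * Real.log (x n) - x n)
  else ((L : ℝ) / (2 * (2 - (L : ℝ)))) * ∑ n, x n ^ ((2 : ℝ) / (L : ℝ))

/-- The gradient of `F` on the positive orthant:
`∇F(q)ₙ = ½ log qₙ` if `L = 2` and `∇F(q)ₙ = qₙ^{(2−L)/L}/(2−L)` if `L > 2`. -/
def bregGradF {N : ℕ} (L : ℕ) (q : Fin N → ℝ) : Fin N → ℝ :=
  fun n => if L = 2 then (1 / 2) * Real.log (q n)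
  else q n ^ (((2 : ℝ) - (L : ℝ)) / (L : ℝ)) / (2 - (L : ℝ))

/-- The Bregman divergence `D_F(p,q) = F(p) − F(q) − ⟨∇F(q), p − q⟩`. -/
def bregD {N : ℕ} (L : ℕ) (p q : Fin N → ℝ) : ℝ :=
  bregF L p - bregF L q - ∑ n, bregGradF L q n * (p n - q n)

/-- Per-coordinate Bregman term as a function of `u = xₙ`. -/
def Tfun (L : ℕ) (z u : ℝ) : ℝ :=
  (if L = 2 then (1 / 2) * (u ^ L * Real.log (u ^ L) - u ^ L)
   else ((L : ℝ) / (2 * (2 - (L : ℝ)))) * (u ^ L) ^ ((2 : ℝ) / (L : ℝ)))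
  + (if L = 2 then (1 / 2) * Real.log (u ^ L)
     else (u ^ L) ^ (((2 : ℝ) - (L : ℝ)) / (L : ℝ)) / (2 - (L : ℝ))) * (z - u ^ L)

lemma bregD_eq {N : ℕ} (L : ℕ) (zp U : Fin N → ℝ) :
    bregD L zp (fun i => U i ^ L) = bregF L zp - ∑ n, Tfun L (zp n) (U n) := by
  unfold bregD Tfun
  by_cases h : L = 2 <;>
    simp only [bregF, bregGradF, h, if_true, if_false, if_pos, if_neg, reduceIte] <;>
  · rw [sub_sub]
    congr 1
    rw [Finset.mul_sum, ← Finset.sum_add_distrib]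

lemma hasDerivAt_Tfun (L : ℕ) (hL : 2 ≤ L) (z : ℝ) (U : ℝ → ℝ) (t u' : ℝ)
    (hU : HasDerivAt U u' t) (hpos : 0 < U t) :
    HasDerivAt (fun s => Tfun L z (U s)) (u' * (z - U t ^ L) / U t ^ (L - 1)) t := by
  have hne : U t ≠ 0 := hpos.ne'
  by_cases hc2 : L = 2
  · subst hc2
    have hfun : (fun s => Tfun 2 z (U s)) = fun s =>
        U s ^ 2 * Real.log (U s) - (1/2) * U s ^ 2 + Real.log (U s) * (z - U s ^ 2) := by
      funext s
      simp only [Tfun, if_pos rfl, Real.log_pow]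
      push_cast
      ring
    rw [hfun]
    have hsq : HasDerivAt (fun s => U s ^ 2) ((2:ℝ) * U t ^ 1 * u') t := hU.pow 2
    have hlog : HasDerivAt (fun s => Real.log (U s)) (u' / U t) t := hU.log hne
    have H := ((hsq.mul hlog).sub (hsq.const_mul (1/2))).add
      (hlog.mul ((hasDerivAt_const t z).sub hsq))
    refine H.congr_deriv ?_
    simp only [Pi.sub_apply]
    field_simp
    ring
  · obtain ⟨k, rfl⟩ : ∃ k, L = k + 3 := ⟨L - 3, by omega⟩
    have hLne : ((k:ℝ) + 3) ≠ 0 := by positivity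
    have hfeq : ∀ u : ℝ, 0 < u → Tfun (k+3) z u =
        (((k:ℝ)+3) / (2 * (2 - ((k:ℝ)+3)))) * u ^ 2
        + (u ^ (k+1))⁻¹ / (2 - ((k:ℝ)+3)) * (z - u ^ (k+3)) := by
      intro u hu
      have e1 : (u ^ (k+3)) ^ ((2 : ℝ) / ((k:ℕ)+3 : ℕ)) = u ^ 2 := by
        rw [← Real.rpow_natCast u (k+3), ← Real.rpow_mul hu.le]
        push_cast
        rw [mul_div_cancel₀ _ hLne]
        norm_num [Real.rpow_two]
      have e2 : (u ^ (k+3)) ^ (((2 : ℝ) - ((k:ℕ)+3 : ℕ)) / ((k:ℕ)+3 : ℕ)) = (u ^ (k+1))⁻¹ := by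
        rw [← Real.rpow_natCast u (k+3), ← Real.rpow_mul hu.le]
        push_cast
        rw [mul_div_cancel₀ _ hLne]
        have : (2 : ℝ) - ((k:ℝ)+3) = -((k:ℝ)+1) := by ring
        rw [this, Real.rpow_neg hu.le, ← Real.rpow_natCast u (k+1)]
        push_cast
        ring_nf
      simp only [Tfun, if_neg hc2]
      push_cast at e1 e2 ⊢
      rw [e1, e2]
    have hev : ∀ᶠ s in 𝓝 t, 0 < U s :=
      hU.continuousAt.preimage_mem_nhds (Ioi_mem_nhds hpos)
    have heq : (fun s => Tfun (k+3) z (U s)) =ᶠ[𝓝 t] fun s =>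
        (((k:ℝ)+3) / (2 * (2 - ((k:ℝ)+3)))) * U s ^ 2
        + (U s ^ (k+1))⁻¹ / (2 - ((k:ℝ)+3)) * (z - U s ^ (k+3)) := by
      filter_upwards [hev] with s hs using hfeq (U s) hs
    have hsq : HasDerivAt (fun s => U s ^ 2) ((2:ℝ) * U t ^ 1 * u') t := hU.pow 2
    have hk1 : HasDerivAt (fun s => U s ^ (k+1)) ((↑(k+1):ℝ) * U t ^ k * u') t := by
      simpa using hU.fun_pow (k+1)
    have hinv : HasDerivAt (fun s => (U s ^ (k+1))⁻¹)
        (-(((↑(k+1):ℝ) * U t ^ k * u')) / (U t ^ (k+1)) ^ 2) t :=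
      hk1.inv (pow_ne_zero _ hne)
    have hLpow : HasDerivAt (fun s => U s ^ (k+3)) ((↑(k+3):ℝ) * U t ^ (k+2) * u') t := by
      simpa using hU.fun_pow (k+3)
    have H := ((hsq.const_mul (((k:ℝ)+3) / (2 * (2 - ((k:ℝ)+3))))).add
      ((hinv.div_const (2 - ((k:ℝ)+3))).mul ((hasDerivAt_const t z).sub hLpow)))
    refine HasDerivAt.congr_of_eventuallyEq ?_ heq
    refine H.congr_deriv ?_
    simp only [Pi.sub_apply]
    have h23 : (2 : ℝ) - ((k:ℝ)+3) ≠ 0 := by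
      intro h; nlinarith [Nat.cast_nonneg (α := ℝ) k]
    have hred : k + 3 - 1 = k + 2 := by omega
    rw [hred]
    field_simp
    push_cast
    ring

lemma transpose_sum {M N : ℕ} (A : Matrix (Fin M) (Fin N) ℝ) (r : Fin M → ℝ) (v : Fin N → ℝ) :
    ∑ n, (Aᵀ.mulVec r) n * v n = ∑ j, r j * (A.mulVec v) j := by
  simp only [Matrix.mulVec, dotProduct, Matrix.transpose_apply,
    Finset.sum_mul, Finset.mul_sum]
  rw [Finset.sum_comm]
  apply Finset.sum_congr rfl
  intro j _
  apply Finset.sum_congr rfl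
  intro n _
  ring

lemma proj_ineq {M N : ℕ} (A : Matrix (Fin M) (Fin N) ℝ) (y : Fin M → ℝ)
    (zp : Fin N → ℝ) (hzp : zp ∈ nnlsSet A y) (q : Fin N → ℝ) (hq : ∀ i, 0 ≤ q i) :
    0 ≤ ∑ j, (A.mulVec zp j - y j) * (A.mulVec q j - A.mulVec zp j) := by
  obtain ⟨hzp0, hmin⟩ := hzp
  set c := ∑ j, (A.mulVec zp j - y j) * (A.mulVec q j - A.mulVec zp j) with hc
  set b := ∑ j, (A.mulVec q j - A.mulVec zp j) ^ 2 with hb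
  have hb0 : 0 ≤ b := Finset.sum_nonneg fun j _ => sq_nonneg _
  have key : ∀ θ : ℝ, 0 ≤ θ → θ ≤ 1 → 0 ≤ 2 * θ * c + θ ^ 2 * b := by
    intro θ hθ0 hθ1
    have hw : ∀ i, 0 ≤ zp i + θ * (q i - zp i) := by
      intro i
      have : zp i + θ * (q i - zp i) = (1 - θ) * zp i + θ * q i := by ring
      rw [this]
      have h1 := mul_nonneg (by linarith : (0:ℝ) ≤ 1 - θ) (hzp0 i)
      have h2 := mul_nonneg hθ0 (hq i)
      linarith
    have hmv : ∀ j, A.mulVec (fun i => zp i + θ * (q i - zp i)) j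
        = A.mulVec zp j + θ * (A.mulVec q j - A.mulVec zp j) := by
      intro j
      simp only [Matrix.mulVec, dotProduct]
      rw [mul_sub, Finset.mul_sum, Finset.mul_sum, ← Finset.sum_sub_distrib,
        ← Finset.sum_add_distrib]
      apply Finset.sum_congr rfl
      intro i _
      ring
    have h1 := hmin (fun i => zp i + θ * (q i - zp i)) hw
    have hexp : ∑ j, (A.mulVec (fun i => zp i + θ * (q i - zp i)) j - y j) ^ 2
        = ∑ j, (A.mulVec zp j - y j) ^ 2 + (2 * θ * c + θ ^ 2 * b) := by
      rw [hc, hb, Finset.mul_sum, Finset.mul_sum, ← Finset.sum_add_distrib,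
        ← Finset.sum_add_distrib]
      apply Finset.sum_congr rfl
      intro j _
      rw [hmv j]
      ring
    rw [hexp] at h1
    linarith
  by_contra hcneg
  push_neg at hcneg
  rcases eq_or_lt_of_le hb0 with hb' | hb'
  · have h1 := key 1 zero_le_one le_rfl
    nlinarith
  · have hθ : 0 < min 1 (-c / b) := lt_min one_pos (div_pos (by linarith) hb')
    have h1 := key _ hθ.le (min_le_left _ _)
    have h2 : min 1 (-c / b) * b ≤ -c := by
      rw [← le_div_iff₀ hb']
      exact min_le_right _ _
    nlinarith

theorem stmt14 {M N : ℕ} (L : ℕ) (hL : 2 ≤ L)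
    (A : Matrix (Fin M) (Fin N) ℝ) (y : Fin M → ℝ)
    (x : ℝ → Fin N → ℝ)
    (hflow : GradFlow A y L x)
    (hpos : ∀ t : ℝ, 0 ≤ t → ∀ i, 0 < x t i)
    (zp : Fin N → ℝ) (hzp : zp ∈ nnlsSet A y) :
    (∀ t : ℝ, 0 ≤ t → ∃ dv : ℝ,
      HasDerivAt (fun s => bregD L zp (fun i => x s i ^ L)) dv t ∧
      dv ≤ -(1 / 2) * ∑ j, (A.mulVec (fun i => x t i ^ L) j - A.mulVec zp j) ^ 2) ∧
    AntitoneOn (fun t => bregD L zp (fun i => x t i ^ L)) (Set.Ici 0) := by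
  have main : ∀ t : ℝ, 0 ≤ t →
      HasDerivAt (fun s => bregD L zp (fun i => x s i ^ L))
        (∑ n, Aᵀ.mulVec (A.mulVec (fun i => x t i ^ L) - y) n * (zp n - x t n ^ L)) t := by
    intro t ht
    have hT : ∀ n, HasDerivAt (fun s => Tfun L (zp n) (x s n))
        (-(Aᵀ.mulVec (A.mulVec (fun i => x t i ^ L) - y) n * (zp n - x t n ^ L))) t := by
      intro n
      have h := hasDerivAt_Tfun L hL (zp n) (fun s => x s n) t _ (hflow t ht n) (hpos t ht n)
      convert h using 1
      have hc : x t n ^ (L - 1) ≠ 0 := pow_ne_zero _ (hpos t ht n).ne'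
      field_simp
    have hfun : (fun s => bregD L zp (fun i => x s i ^ L))
        = fun s => bregF L zp - ∑ n, Tfun L (zp n) (x s n) :=
      funext fun s => bregD_eq L zp (x s)
    rw [hfun]
    have Hsum : HasDerivAt (fun s => ∑ n, Tfun L (zp n) (x s n))
        (∑ n, -(Aᵀ.mulVec (A.mulVec (fun i => x t i ^ L) - y) n * (zp n - x t n ^ L))) t :=
      HasDerivAt.fun_sum (fun n _ => hT n)
    have H := (hasDerivAt_const t (bregF L zp)).sub Hsum
    refine H.congr_deriv ?_
    simp
  have bound : ∀ t : ℝ, 0 ≤ t →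
      (∑ n, Aᵀ.mulVec (A.mulVec (fun i => x t i ^ L) - y) n * (zp n - x t n ^ L))
        ≤ -(1 / 2) * ∑ j, (A.mulVec (fun i => x t i ^ L) j - A.mulVec zp j) ^ 2 := by
    intro t ht
    set q : Fin N → ℝ := fun i => x t i ^ L with hqdef
    have hveq : (fun n => zp n - q n) = zp - q := rfl
    have hrw : (∑ n, Aᵀ.mulVec (A.mulVec q - y) n * (zp n - q n))
        = ∑ j, (A.mulVec q j - y j) * (A.mulVec zp j - A.mulVec q j) := by
      rw [transpose_sum A (A.mulVec q - y) (fun n => zp n - q n)]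
      apply Finset.sum_congr rfl
      intro j _
      rw [hveq, Matrix.mulVec_sub]
      simp [Pi.sub_apply]
    rw [hrw]
    have hproj := proj_ineq A y zp hzp q (fun i => pow_nonneg (hpos t ht i).le L)
    have hsq : 0 ≤ ∑ j, (A.mulVec q j - A.mulVec zp j) ^ 2 :=
      Finset.sum_nonneg fun j _ => sq_nonneg _
    have hid : (∑ j, (A.mulVec q j - y j) * (A.mulVec zp j - A.mulVec q j))
        = -(∑ j, (A.mulVec q j - A.mulVec zp j) ^ 2)
          - ∑ j, (A.mulVec zp j - y j) * (A.mulVec q j - A.mulVec zp j) := by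
      rw [← Finset.sum_neg_distrib, ← Finset.sum_sub_distrib]
      apply Finset.sum_congr rfl
      intro j _
      ring
    rw [hid]
    linarith
  refine ⟨fun t ht => ⟨_, main t ht, bound t ht⟩, ?_⟩
  apply antitoneOn_of_deriv_nonpos (convex_Ici 0)
  · intro s hs
    exact (main s hs).continuousAt.continuousWithinAt
  · intro s hs
    rw [interior_Ici] at hs
    exact ((main s (le_of_lt hs)).differentiableAt).differentiableWithinAt
  · intro s hs
    rw [interior_Ici] at hs
    rw [(main s hs.le).deriv]
    have h2 := bound s hs.le
    have h3 : 0 ≤ ∑ j, (A.mulVec (fun i => x s i ^ L) j - A.mulVec zp j) ^ 2 :=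
      Finset.sum_nonneg fun j _ => sq_nonneg _
    linarith
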